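/- For every natural number n and every real x > 0, x · |h_n^{(1)}(x)| ≥ 1; equivalently, | ∑_{m=0}^{n} ((n+m)!/(m!(n−m)!)) (i/(2x))^m | ≥ 1. In particular, the spherical Hankel function h_n^{(1)}(x) does not vanish for any real x > 0. -/

import Mathlib

open Real Finset

noncomputable section

/-- The polynomial factor in the spherical Hankel function:
`∑_{m=0}^{n} ((n+m)!/(m!(n−m)!)) (i/(2x))^m`. -/
def sphHankelSum (n : ℕ) (x : ℝ) : ℂ :=
  ∑ m ∈ Finset.range (n + 1),
    ((Nat.factorial (n + m) : ℂ) / ((Nat.factorial m : ℂ) * (Nat.factorial (n - m) : ℂ))) *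
      (Complex.I / (2 * (x : ℂ))) ^ m

/-- The spherical Hankel function of the first kind of order `n`:
`h_n^{(1)}(x) = (−i)^{n+1} (e^{ix}/x) ∑_{m=0}^{n} ((n+m)!/(m!(n−m)!)) (i/(2x))^m`. -/
def sphHankel1 (n : ℕ) (x : ℝ) : ℂ :=
  (-Complex.I) ^ (n + 1) * (Complex.exp (Complex.I * x) / (x : ℂ)) * sphHankelSum n x

lemma hk_desc_key (m i : ℕ) :
    (m+2).descFactorial (2*i+2) =
      (2*i+2) * (2*(m-i)+1) * m.descFactorial (2*i) + m.descFactorial (2*i+2) := by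
  rcases lt_or_ge m (2*i) with h | h
  · rw [Nat.descFactorial_of_lt (by omega), Nat.descFactorial_of_lt (by omega),
      Nat.descFactorial_of_lt (by omega)]; ring
  · have e1 : (m+2).descFactorial (2*i+2) = (m+2)*((m+1)*m.descFactorial (2*i)) := by
      rw [show 2*i+2 = (2*i+1)+1 from rfl, Nat.succ_descFactorial_succ,
        Nat.succ_descFactorial_succ]
    have e2 : m.descFactorial (2*i+2) = (m - (2*i+1)) * ((m - 2*i) * m.descFactorial (2*i)) := by
      rw [show 2*i+2 = (2*i+1)+1 from rfl, Nat.descFactorial_succ, Nat.descFactorial_succ]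
    rw [e1, e2]
    have key : (m+2)*(m+1) = (2*i+2)*(2*(m-i)+1) + (m-(2*i+1))*(m-2*i) := by
      rcases Nat.eq_or_lt_of_le h with h' | h'
      · have hm : m - (2*i+1) = 0 := by omega
        have hmi : m - i = i := by omega
        rw [hm, hmi, ← h']
        ring
      · have h1 : 2*i+1 ≤ m := h'
        zify [h1, show 2*i ≤ m by omega, show i ≤ m by omega]
        ring
    calc (m+2)*((m+1)*m.descFactorial (2*i)) = ((m+2)*(m+1))*m.descFactorial (2*i) := by ring
    _ = ((2*i+2)*(2*(m-i)+1) + (m-(2*i+1))*(m-2*i))*m.descFactorial (2*i) := by rw [key]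
    _ = _ := by ring

lemma hk_nat_R1 (n k : ℕ) :
    (n+1-k) * (n+1+k).descFactorial (2*k) = (n+1+k) * (n+k).descFactorial (2*k) := by
  have h := Nat.succ_descFactorial (n+k) (2*k)
  have h2 : n+k+1-2*k = n+1-k := by omega
  rw [h2] at h
  rw [show n+1+k = n+k+1 by omega]
  exact h

def hkA (n k : ℕ) : ℝ :=
  ((2*k).factorial * (n+k).descFactorial (2*k) : ℝ) / (4^k * (k.factorial)^2)

def hkT (n : ℕ) (x : ℝ) : ℝ := ∑ k ∈ Finset.range (n+1), hkA n k / x^(2*k)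

def hkY (n : ℕ) (x : ℝ) : ℝ :=
  ∑ k ∈ Finset.range (n+1), ((n-k : ℕ) : ℝ) * hkA n k / x^(2*k)

lemma hkA_nonneg (n k : ℕ) : 0 ≤ hkA n k := by
  unfold hkA; positivity

lemma hkA_zero_right (n : ℕ) : hkA n 0 = 1 := by
  simp [hkA]

lemma hkA_of_lt {n k : ℕ} (h : n < k) : hkA n k = 0 := by
  unfold hkA
  rw [Nat.descFactorial_of_lt (by omega)]
  simp

lemma hkT_ge_one {n : ℕ} {x : ℝ} (hx : 0 < x) : 1 ≤ hkT n x := by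
  unfold hkT
  rw [Finset.sum_range_succ']
  have h0 : hkA n 0 / x^(2*0) = 1 := by simp [hkA_zero_right]
  rw [h0]
  have : 0 ≤ ∑ k ∈ Finset.range n, hkA n (k+1) / x^(2*(k+1)) := by
    apply Finset.sum_nonneg
    intro k _
    have := hkA_nonneg n (k+1)
    positivity
  linarith

lemma hkA_R1 (n k : ℕ) :
    ((n+1-k : ℕ) : ℝ) * hkA (n+1) k = ((n+1+k : ℕ) : ℝ) * hkA n k := by
  unfold hkA
  rw [mul_div_assoc', mul_div_assoc']
  congr 1
  norm_cast
  calc (n+1-k) * ((2*k).factorial * (n+1+k).descFactorial (2*k))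
      = (2*k).factorial * ((n+1-k) * (n+1+k).descFactorial (2*k)) := by ring
    _ = (2*k).factorial * ((n+1+k) * (n+k).descFactorial (2*k)) := by rw [hk_nat_R1]
    _ = (n+1+k) * ((2*k).factorial * (n+k).descFactorial (2*k)) := by ring

lemma hkY_succ (n : ℕ) (x : ℝ) :
    hkY (n+1) x = (2*(n:ℝ)+1) * hkT n x - hkY n x := by
  unfold hkY hkT
  rw [Finset.sum_range_succ (n := n+1)]
  have htop : ((n+1-(n+1) : ℕ) : ℝ) * hkA (n+1) (n+1) / x^(2*(n+1)) = 0 := by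
    simp
  rw [htop, add_zero, Finset.mul_sum, ← Finset.sum_sub_distrib]
  apply Finset.sum_congr rfl
  intro k hk
  have hkn : k ≤ n := by simpa [Nat.lt_succ_iff] using hk
  have h1 := hkA_R1 n k
  have hc1 : ((n+1-k : ℕ) : ℝ) = (n:ℝ)+1-(k:ℝ) := by
    push_cast [Nat.cast_sub (show k ≤ n+1 by omega)]; ring
  have hc2 : ((n+1+k : ℕ) : ℝ) = (n:ℝ)+1+(k:ℝ) := by push_cast; ring
  have hc3 : ((n-k : ℕ) : ℝ) = (n:ℝ)-(k:ℝ) := by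
    push_cast [Nat.cast_sub hkn]; ring
  rw [hc1, hc2] at h1
  rw [hc1, hc3]
  have : ((n:ℝ)+1-(k:ℝ)) * hkA (n+1) k = (2*(n:ℝ)+1) * hkA n k - ((n:ℝ)-(k:ℝ)) * hkA n k := by
    rw [h1]; ring
  calc ((n:ℝ)+1-(k:ℝ)) * hkA (n+1) k / x^(2*k)
      = (((n:ℝ)+1-(k:ℝ)) * hkA (n+1) k) / x^(2*k) := by ring
    _ = ((2*(n:ℝ)+1) * hkA n k - ((n:ℝ)-(k:ℝ)) * hkA n k) / x^(2*k) := by rw [this]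
    _ = _ := by ring



lemma hkA_key (n j : ℕ) :
    hkA (n+2) (j+1) = (2*(n:ℝ)+3)*(2*(j:ℝ)+1) * hkA (n+1) j + hkA n (j+1) := by
  have h := hk_desc_key (n+j+1) j
  have hmi : n+j+1-j = n+1 := by omega
  rw [hmi] at h
  unfold hkA
  have e1 : n+2+(j+1) = (n+j+1)+2 := by omega
  have e2 : n+(j+1) = n+j+1 := by omega
  have e3 : n+1+j = n+j+1 := by omega
  have e4 : 2*(j+1) = 2*j+2 := by omega
  rw [e1, e2, e3, e4]
  have hcast : ((n+j+1+2).descFactorial (2*j+2) : ℝ)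
      = (2*(j:ℝ)+2) * (2*((n:ℝ)+1)+1) * ((n+j+1).descFactorial (2*j) : ℝ)
        + ((n+j+1).descFactorial (2*j+2) : ℝ) := by
    rw [h]; push_cast; ring
  rw [hcast]
  have hf1 : ((2*j+2).factorial : ℝ) = (2*(j:ℝ)+2) * ((2*(j:ℝ)+1) * ((2*j).factorial : ℝ)) := by
    rw [show 2*j+2 = (2*j+1)+1 from rfl, Nat.factorial_succ, Nat.factorial_succ]
    push_cast; ring
  have hf2 : ((j+1).factorial : ℝ) = ((j:ℝ)+1) * (j.factorial : ℝ) := by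
    rw [Nat.factorial_succ]; push_cast; ring
  have h4 : (4:ℝ)^(j+1) = 4 * 4^j := by ring
  rw [hf1, hf2, h4]
  have hne1 : (4:ℝ)^j ≠ 0 := by positivity
  have hne2 : (j.factorial : ℝ) ≠ 0 := by
    exact_mod_cast Nat.factorial_ne_zero j
  have hne3 : ((j:ℝ)+1) ≠ 0 := by positivity
  field_simp
  ring



lemma hkT_rec (n : ℕ) (x : ℝ) (hx : x ≠ 0) :
    x^2 * hkT (n+2) x =
      (2*(n:ℝ)+3)^2 * hkT (n+1) x + x^2 * hkT n x - 2*(2*(n:ℝ)+3) * hkY (n+1) x := by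
  unfold hkT hkY
  -- extend the middle sum (range (n+1)) to range (n+3)
  have hext : ∑ k ∈ Finset.range (n+1), hkA n k / x^(2*k)
      = ∑ k ∈ Finset.range (n+3), hkA n k / x^(2*k) := by
    apply Finset.sum_subset (Finset.range_subset_range.2 (by omega))
    intro k _ hk
    have : n < k := by simp only [Finset.mem_range] at hk ⊢; omega
    rw [hkA_of_lt this]; simp
  rw [hext]
  rw [Finset.sum_range_succ' (fun k => hkA (n+2) k / x^(2*k)) (n+2),
      Finset.sum_range_succ' (fun k => hkA n k / x^(2*k)) (n+2)]
  simp only [hkA_zero_right, Nat.mul_zero, pow_zero, div_one]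
  simp only [mul_add, mul_one, Finset.mul_sum]
  have key : ∀ k ∈ Finset.range (n+2),
      x^2 * (hkA (n+2) (k+1) / x^(2*k+2))
        = ((2*(n:ℝ)+3)^2 * (hkA (n+1) k / x^(2*k)) + x^2 * (hkA n (k+1) / x^(2*k+2)))
          - (2*(2*(n:ℝ)) + 2*3) * (((n+1-k : ℕ) : ℝ) * hkA (n+1) k / x^(2*k)) := by
    intro k hk
    have hkn : k ≤ n+1 := by simp only [Finset.mem_range] at hk; omega
    have hc : ((n+1-k : ℕ) : ℝ) = (n:ℝ)+1-(k:ℝ) := by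
      push_cast [Nat.cast_sub hkn]; ring
    rw [hc, hkA_key n k]
    have hxk : x^(2*k) ≠ 0 := pow_ne_zero _ hx
    have hp : x^(2*k+2) = x^(2*k) * x^2 := by ring
    rw [hp]
    field_simp
    ring
  rw [Finset.sum_congr rfl key, Finset.sum_sub_distrib, Finset.sum_add_distrib]
  ring



def hkC (n m : ℕ) : ℂ := ((n+m).descFactorial (2*m) : ℂ) / (m.factorial : ℂ)

lemma hkC_of_lt {n m : ℕ} (h : n < m) : hkC n m = 0 := by
  unfold hkC
  rw [Nat.descFactorial_of_lt (by omega)]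
  simp

lemma hkC_zero_right (n : ℕ) : hkC n 0 = 1 := by simp [hkC]

lemma sphHankelSum_eq (n : ℕ) (x : ℝ) {N : ℕ} (hN : n+1 ≤ N) :
    sphHankelSum n x = ∑ m ∈ Finset.range N, hkC n m * (Complex.I / (2 * (x:ℝ))) ^ m := by
  unfold sphHankelSum
  rw [← Finset.sum_subset (Finset.range_subset_range.2 hN)]
  · apply Finset.sum_congr rfl
    intro m hm
    have hmn : m ≤ n := by simp only [Finset.mem_range] at hm; omega
    congr 1
    unfold hkC
    have hfac := Nat.factorial_mul_descFactorial (show 2*m ≤ n+m by omega)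
    have hsub : n+m-2*m = n-m := by omega
    rw [hsub] at hfac
    have hcast : ((n+m).factorial : ℂ) = ((n-m).factorial : ℂ) * ((n+m).descFactorial (2*m) : ℂ) := by
      exact_mod_cast congrArg (Nat.cast : ℕ → ℂ) hfac.symm
    rw [hcast]
    have h1 : ((m.factorial : ℂ)) ≠ 0 := by exact_mod_cast Nat.factorial_ne_zero m
    have h2 : (((n-m).factorial : ℂ)) ≠ 0 := by exact_mod_cast Nat.factorial_ne_zero (n-m)
    field_simp
  · intro m _ hm
    have : n < m := by simp only [Finset.mem_range] at hm ⊢; omega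
    rw [hkC_of_lt this, zero_mul]



lemma hkC_key (n j : ℕ) :
    hkC (n+2) (j+1) = 2*(2*(n:ℂ)+3) * hkC (n+1) j + hkC n (j+1) := by
  have h := hk_desc_key (n+j+1) j
  have hmi : n+j+1-j = n+1 := by omega
  rw [hmi] at h
  unfold hkC
  have e1 : n+2+(j+1) = (n+j+1)+2 := by omega
  have e2 : n+(j+1) = n+j+1 := by omega
  have e3 : n+1+j = n+j+1 := by omega
  have e4 : 2*(j+1) = 2*j+2 := by omega
  rw [e1, e2, e3, e4]
  have hcast : ((n+j+1+2).descFactorial (2*j+2) : ℂ)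
      = (2*(j:ℂ)+2) * (2*((n:ℂ)+1)+1) * ((n+j+1).descFactorial (2*j) : ℂ)
        + ((n+j+1).descFactorial (2*j+2) : ℂ) := by
    rw [h]; push_cast; ring
  rw [hcast]
  have hf2 : (((j+1).factorial : ℕ) : ℂ) = ((j:ℂ)+1) * (j.factorial : ℂ) := by
    rw [Nat.factorial_succ]; push_cast; ring
  rw [hf2]
  have h1 : ((j.factorial : ℕ) : ℂ) ≠ 0 := by exact_mod_cast Nat.factorial_ne_zero j
  have h2 : ((j:ℂ)+1) ≠ 0 := by
    intro hc
    have : ((j:ℂ)+1) = ((j+1 : ℕ) : ℂ) := by push_cast; ring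
    rw [this] at hc
    exact (Nat.cast_ne_zero (R := ℂ)).2 (Nat.succ_ne_zero j) hc
  field_simp
  ring

lemma hkS_rec (n : ℕ) (x : ℝ) (hx : x ≠ 0) :
    sphHankelSum (n+2) x
      = 2*(2*(n:ℂ)+3) * (Complex.I / (2 * (x:ℂ))) * sphHankelSum (n+1) x + sphHankelSum n x := by
  have hxc : (x:ℂ) ≠ 0 := by exact_mod_cast hx
  rw [sphHankelSum_eq (n+2) x (le_refl (n+3)), sphHankelSum_eq (n+1) x (le_refl (n+2)),
      sphHankelSum_eq n x (show n+1 ≤ n+3 by omega)]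
  set w : ℂ := Complex.I / (2 * (x:ℂ)) with hw
  rw [Finset.sum_range_succ' (fun m => hkC (n+2) m * w^m) (n+2),
      Finset.sum_range_succ' (fun m => hkC n m * w^m) (n+2)]
  simp only [pow_zero, mul_one, hkC_zero_right]
  rw [Finset.mul_sum]
  have key : ∀ j ∈ Finset.range (n+2),
      hkC (n+2) (j+1) * w^(j+1)
        = 2*(2*(n:ℂ)+3) * w * (hkC (n+1) j * w^j) + hkC n (j+1) * w^(j+1) := by
    intro j _
    rw [hkC_key n j]
    ring
  rw [Finset.sum_congr rfl key, Finset.sum_add_distrib]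
  ring



lemma hk_main (x : ℝ) (hx : x ≠ 0) : ∀ n : ℕ,
    ((sphHankelSum n x).re^2 + (sphHankelSum n x).im^2 = hkT n x) ∧
    ((sphHankelSum (n+1) x).re^2 + (sphHankelSum (n+1) x).im^2 = hkT (n+1) x) ∧
    (x * ((sphHankelSum (n+1) x).im * (sphHankelSum n x).re
          - (sphHankelSum (n+1) x).re * (sphHankelSum n x).im) = hkY (n+1) x) := by
  have hS0 : sphHankelSum 0 x = 1 := by
    simp [sphHankelSum]
  have hS1 : sphHankelSum 1 x = 1 + Complex.I * (((1/x : ℝ)) : ℂ) := by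
    have hxc : (x:ℂ) ≠ 0 := by exact_mod_cast hx
    rw [sphHankelSum]
    rw [Finset.sum_range_succ, Finset.sum_range_succ, Finset.sum_range_zero]
    norm_num [Nat.factorial]
    push_cast
    field_simp
  have hS1re : (sphHankelSum 1 x).re = 1 := by
    rw [hS1]; simp
  have hS1im : (sphHankelSum 1 x).im = 1/x := by
    rw [hS1]; simp
  have hT0 : hkT 0 x = 1 := by
    simp [hkT, hkA]
  have hA11 : hkA 1 1 = 1 := by
    norm_num [hkA, Nat.descFactorial]
  have hT1 : hkT 1 x = 1 + 1/x^2 := by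
    rw [hkT, Finset.sum_range_succ, Finset.sum_range_succ, Finset.sum_range_zero]
    norm_num [hkA, hA11]
  have hY1 : hkY 1 x = 1 := by
    rw [hkY, Finset.sum_range_succ, Finset.sum_range_succ, Finset.sum_range_zero]
    norm_num [hkA]
  intro n
  induction n with
  | zero =>
    refine ⟨by rw [hS0, hT0]; norm_num, ?_, ?_⟩
    · rw [hS1re, hS1im, hT1]; ring
    · rw [hS1re, hS1im, hS0, hY1]
      simp only [Complex.one_re, Complex.one_im]
      field_simp
      ring
  | succ n ih =>
    obtain ⟨h1, h2, h3⟩ := ih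
    refine ⟨h2, ?_, ?_⟩
    · -- t_{n+2}
      have hrec := hkS_rec n x hx
      have hcoef : 2*(2*(n:ℂ)+3) * (Complex.I / (2 * (x:ℂ)))
          = Complex.I * ((((2*(n:ℝ)+3)/x : ℝ)) : ℂ) := by
        have hxc : (x:ℂ) ≠ 0 := by exact_mod_cast hx
        push_cast
        field_simp
      rw [hcoef] at hrec
      have hre := congrArg Complex.re hrec
      have him := congrArg Complex.im hrec
      simp only [Complex.add_re, Complex.add_im, Complex.mul_re, Complex.mul_im,
        Complex.I_re, Complex.I_im, Complex.ofReal_re, Complex.ofReal_im] at hre him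
      -- hre : re S(n+2) = -( (2n+3)/x * im S(n+1) ) + re S n  (roughly)
      have hR2 := hkT_rec n x hx
      have hxx : x^2 ≠ 0 := pow_ne_zero _ hx
      have ha : x * (sphHankelSum (n+2) x).re
          = x * (sphHankelSum n x).re - (2*(n:ℝ)+3) * (sphHankelSum (n+1) x).im := by
        rw [hre]; field_simp; ring
      have hb : x * (sphHankelSum (n+2) x).im
          = x * (sphHankelSum n x).im + (2*(n:ℝ)+3) * (sphHankelSum (n+1) x).re := by
        rw [him]; field_simp; ring
      have goal2 : x^2 * ((sphHankelSum (n+2) x).re^2 + (sphHankelSum (n+2) x).im^2)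
          = x^2 * hkT (n+2) x := by
        linear_combination (x*(sphHankelSum (n+2) x).re
            + (x*(sphHankelSum n x).re - (2*(n:ℝ)+3)*(sphHankelSum (n+1) x).im)) * ha
          + (x*(sphHankelSum (n+2) x).im
            + (x*(sphHankelSum n x).im + (2*(n:ℝ)+3)*(sphHankelSum (n+1) x).re)) * hb
          + x^2*h1 + (2*(n:ℝ)+3)^2*h2 - 2*(2*(n:ℝ)+3)*h3 - hR2
      exact mul_left_cancel₀ hxx goal2
    · -- the Y component
      have hrec := hkS_rec n x hx
      have hcoef : 2*(2*(n:ℂ)+3) * (Complex.I / (2 * (x:ℂ)))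
          = Complex.I * ((((2*(n:ℝ)+3)/x : ℝ)) : ℂ) := by
        have hxc : (x:ℂ) ≠ 0 := by exact_mod_cast hx
        push_cast
        field_simp
      rw [hcoef] at hrec
      have hre := congrArg Complex.re hrec
      have him := congrArg Complex.im hrec
      simp only [Complex.add_re, Complex.add_im, Complex.mul_re, Complex.mul_im,
        Complex.I_re, Complex.I_im, Complex.ofReal_re, Complex.ofReal_im] at hre him
      have ha : x * (sphHankelSum (n+2) x).re
          = x * (sphHankelSum n x).re - (2*(n:ℝ)+3) * (sphHankelSum (n+1) x).im := by
        rw [hre]; field_simp; ring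
      have hb : x * (sphHankelSum (n+2) x).im
          = x * (sphHankelSum n x).im + (2*(n:ℝ)+3) * (sphHankelSum (n+1) x).re := by
        rw [him]; field_simp; ring
      have hR1 : hkY (n+2) x = (2*(n:ℝ)+3) * hkT (n+1) x - hkY (n+1) x := by
        have h := hkY_succ (n+1) x
        push_cast at h
        convert h using 2 <;> push_cast <;> ring
      have goalm : x * (x * ((sphHankelSum (n+2) x).im * (sphHankelSum (n+1) x).re
            - (sphHankelSum (n+2) x).re * (sphHankelSum (n+1) x).im))
          = x * hkY (n+2) x := by
        linear_combination (x*(sphHankelSum (n+1) x).re)*hb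
          - (x*(sphHankelSum (n+1) x).im)*ha
          + (2*(n:ℝ)+3)*x*h2 - x*h3 - x*hR1
      exact mul_left_cancel₀ hx goalm



lemma hk_normSq_ge (n : ℕ) {x : ℝ} (hx : 0 < x) :
    1 ≤ (sphHankelSum n x).re^2 + (sphHankelSum n x).im^2 := by
  have h := (hk_main x (ne_of_gt hx) n).1
  rw [h]
  exact hkT_ge_one hx

/-- **Nonvanishing of spherical Hankel functions on the positive real axis.**
For every `n ∈ ℕ` and every real `x > 0`, `x·|h_n^{(1)}(x)| ≥ 1`; equivalently
`|∑_{m=0}^{n} ((n+m)!/(m!(n−m)!)) (i/(2x))^m| ≥ 1`.  In particular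
`h_n^{(1)}(x) ≠ 0`. -/
theorem sphHankel1_ne_zero (n : ℕ) (x : ℝ) (hx : 0 < x) :
    1 ≤ x * ‖sphHankel1 n x‖ ∧
    1 ≤ ‖sphHankelSum n x‖ ∧
    sphHankel1 n x ≠ 0 := by
  have hx0 : x ≠ 0 := ne_of_gt hx
  have habs : 1 ≤ ‖sphHankelSum n x‖ := by
    have h := hk_normSq_ge n hx
    have hsq : (‖sphHankelSum n x‖)^2
        = (sphHankelSum n x).re^2 + (sphHankelSum n x).im^2 := by
      rw [Complex.sq_norm, Complex.normSq_apply]; ring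
    nlinarith [norm_nonneg (sphHankelSum n x)]
  have habsH : ‖sphHankel1 n x‖ = ‖sphHankelSum n x‖ / x := by
    unfold sphHankel1
    rw [norm_mul, norm_mul, norm_pow, norm_div, Complex.norm_exp]
    have h1 : ‖-Complex.I‖ = 1 := by simp
    have h2 : (Complex.I * (x:ℂ)).re = 0 := by simp
    have h3 : ‖((x:ℝ) : ℂ)‖ = x := by
      rw [Complex.norm_real, Real.norm_eq_abs, abs_of_pos hx]
    rw [h1, h2, h3, Real.exp_zero, one_pow]
    ring
  have hmain : 1 ≤ x * ‖sphHankel1 n x‖ := by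
    rw [habsH]
    rw [mul_div_assoc']
    rw [mul_comm, mul_div_assoc, div_self hx0, mul_one]
    exact habs
  refine ⟨hmain, habs, ?_⟩
  intro h0
  rw [h0] at hmain
  simp at hmain
  linarith




end
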